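/- If U is a measure on ℝ⁺ with U([0,t]) ~ L(t) as t → ∞ for a slowly varying function L, and U has an ultimately monotone density u, then for every ε > 0, u(t) = o(t^{ε-1} L(t)) as t → ∞. -/
import Mathlib


open MeasureTheory Filter Set Asymptotics

/-- If `U([0,t]) ~ L(t)` as `t → ∞` for a slowly varying `L`, and `U` has an
ultimately monotone density `u`, then `u(t) = o(t^(ε-1) L(t))` as `t → ∞` for every `ε > 0`. -/
theorem stmt1 (L u : ℝ → ℝ) (U : Measure ℝ)
    (hL : ∀ t > (0:ℝ), Tendsto (fun x => L (t * x) / L x) atTop (nhds 1))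
    (hLpos : ∀ᶠ x in atTop, 0 < L x)
    (hdens : ∀ t ≥ (0:ℝ), (U (Set.Icc 0 t)).toReal = ∫ s in (0:ℝ)..t, u s)
    (hmono : ∃ x₀ : ℝ, MonotoneOn u (Set.Ioi x₀) ∨ AntitoneOn u (Set.Ioi x₀))
    (hU : Tendsto (fun t => (U (Set.Icc 0 t)).toReal / L t) atTop (nhds 1)) :
    ∀ ε > (0:ℝ), (fun t => u t) =o[atTop] (fun t => t ^ (ε - 1) * L t) := by
  obtain ⟨x₀, hm⟩ := hmono
  -- finiteness of U on Icc
  have hfin : ∀ t : ℝ, U (Set.Icc 0 t) ≠ ⊤ := by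
    intro t ht
    have hev : ∀ᶠ s in atTop, (0:ℝ) = (U (Set.Icc 0 s)).toReal / L s := by
      filter_upwards [eventually_ge_atTop t] with s hs
      have htop : U (Set.Icc 0 s) = ⊤ :=
        top_le_iff.mp (ht ▸ measure_mono (Set.Icc_subset_Icc_right hs))
      simp [htop]
    have h0 : Tendsto (fun s => (U (Set.Icc 0 s)).toReal / L s) atTop (nhds 0) :=
      Tendsto.congr' hev tendsto_const_nhds
    exact one_ne_zero (tendsto_nhds_unique hU h0)
  set V : ℝ → ℝ := fun t => (U (Set.Icc 0 t)).toReal with hVdef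
  have hVmono : Monotone V := fun s t hst =>
    ENNReal.toReal_mono (hfin t) (measure_mono (Set.Icc_subset_Icc_right hst))
  -- eventually L and V are positive
  have hVL : ∀ᶠ t in atTop, 0 < L t ∧ 0 < V t := by
    filter_upwards [hLpos, hU.eventually (lt_mem_nhds (by norm_num : (1/2:ℝ) < 1))] with t h1 h2
    refine ⟨h1, ?_⟩
    have := (lt_div_iff₀ h1).mp h2
    linarith
  obtain ⟨T₀, hT₀⟩ := eventually_atTop.mp hVL
  set T : ℝ := max T₀ 1 with hTdef
  have hT1 : (1:ℝ) ≤ T := le_max_right _ _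
  have hT : ∀ t ≥ T, 0 < L t ∧ 0 < V t := fun t ht => hT₀ t (le_trans (le_max_left _ _) ht)
  -- integrability
  have hInt : ∀ t, T ≤ t → IntervalIntegrable u volume 0 t := by
    intro t ht
    by_contra hni
    have h0 : ∫ s in (0:ℝ)..t, u s = 0 := intervalIntegral.integral_undef hni
    have hVt : V t = 0 := (hdens t (by linarith)).trans h0
    exact absurd hVt (ne_of_gt (hT t ht).2)
  have hII : ∀ a b, T ≤ a → a ≤ b → IntervalIntegrable u volume a b := by
    intro a b ha hab
    have h0b : (0:ℝ) ≤ b := by linarith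
    refine (hInt b (le_trans ha hab)).mono_set ?_
    rw [Set.uIcc_of_le hab, Set.uIcc_of_le h0b]
    exact Set.Icc_subset_Icc_left (by linarith)
  have hsub : ∀ a b, T ≤ a → a ≤ b → ∫ s in a..b, u s = V b - V a := by
    intro a b ha hab
    have h1 := intervalIntegral.integral_add_adjacent_intervals (hInt a ha) (hII a b ha hab)
    have ha' : V a = ∫ s in (0:ℝ)..a, u s := hdens a (by linarith)
    have hb' : V b = ∫ s in (0:ℝ)..b, u s := hdens b (by linarith)
    rw [ha', hb']
    linarith
  -- limit facts
  have h2t : Tendsto (fun t : ℝ => 2 * t) atTop atTop := by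
    exact Tendsto.const_mul_atTop two_pos tendsto_id
  have hht : Tendsto (fun t : ℝ => t / 2) atTop atTop := by
    exact Tendsto.atTop_div_const two_pos tendsto_id
  have hA : Tendsto (fun t => V (2 * t) / L t) atTop (nhds 1) := by
    have A1 : Tendsto (fun t => V (2 * t) / L (2 * t)) atTop (nhds 1) := hU.comp h2t
    have A3 := A1.mul (hL 2 two_pos)
    rw [one_mul] at A3
    refine A3.congr' ?_
    filter_upwards [h2t.eventually hLpos] with t hLt
    field_simp
  have hB : Tendsto (fun t => V (t / 2) / L t) atTop (nhds 1) := by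
    have B1 : Tendsto (fun t => V (t / 2) / L (t / 2)) atTop (nhds 1) := hU.comp hht
    have B2 : Tendsto (fun t => L (t / 2) / L t) atTop (nhds 1) := by
      have := hL (1/2) (by norm_num)
      refine this.congr fun x => ?_
      have hx : (1:ℝ)/2 * x = x / 2 := by ring
      rw [hx]
    have B3 := B1.mul B2
    rw [one_mul] at B3
    refine B3.congr' ?_
    filter_upwards [hht.eventually hLpos] with t hLt
    field_simp
  have hg2 : Tendsto (fun t => (V (2 * t) - V t) / L t) atTop (nhds 0) := by
    have := hA.sub hU
    rw [sub_self] at this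
    refine this.congr fun t => ?_
    rw [sub_div]
  have hh2 : Tendsto (fun t => (V t - V (t / 2)) / L t) atTop (nhds 0) := by
    have := hU.sub hB
    rw [sub_self] at this
    refine this.congr fun t => ?_
    rw [sub_div]
  -- main argument
  intro ε hε
  rw [Asymptotics.isLittleO_iff]
  intro c hc
  have hc2 : (0:ℝ) < c / 2 := by linarith
  filter_upwards [eventually_ge_atTop (max (2 * T) (2 * x₀ + 2)),
    eventually_ge_atTop (1:ℝ),
    hg2.eventually (gt_mem_nhds hc2),
    hh2.eventually (gt_mem_nhds hc2)] with t hbig ht1 hg hh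
  have ht2T : 2 * T ≤ t := le_trans (le_max_left _ _) hbig
  have htx0 : 2 * x₀ + 2 ≤ t := le_trans (le_max_right _ _) hbig
  have hTt : T ≤ t := by linarith
  have hTh : T ≤ t / 2 := by linarith
  have hx0h : x₀ < t / 2 := by linarith
  have hx0t : x₀ < t := by linarith
  have hx02t : x₀ < 2 * t := by linarith
  have htpos : (0:ℝ) < t := by linarith
  have hLt : 0 < L t := (hT t hTt).1
  -- upper bound on the relevant increments
  have hgub : V (2 * t) - V t < c / 2 * L t := (div_lt_iff₀ hLt).mp hg
  have hhub : V t - V (t / 2) < c / 2 * L t := (div_lt_iff₀ hLt).mp hh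
  have hg0 : 0 ≤ V (2 * t) - V t := sub_nonneg.mpr (hVmono (by linarith))
  have hh0 : 0 ≤ V t - V (t / 2) := sub_nonneg.mpr (hVmono (by linarith))
  -- bounds on u t
  have key : 0 ≤ u t ∧ u t * t ≤ c / 2 * L t * 2 := by
    rcases hm with hm | hm
    · -- monotone
      have e1 : ∫ s in t..(2*t), u s = V (2*t) - V t := hsub t (2*t) hTt (by linarith)
      have e2 : ∫ s in (t/2)..t, u s = V t - V (t/2) := hsub (t/2) t hTh (by linarith)
      have b1 : t * u t ≤ V (2*t) - V t := by
        have := intervalIntegral.integral_mono_on (by linarith : t ≤ 2*t)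
          (intervalIntegrable_const (c := u t)) (hII t (2*t) hTt (by linarith))
          (fun x hx => hm (Set.mem_Ioi.mpr hx0t) (Set.mem_Ioi.mpr (by linarith [hx.1])) hx.1)
        rw [intervalIntegral.integral_const, e1, smul_eq_mul] at this
        linarith
      have b2 : V t - V (t/2) ≤ (t/2) * u t := by
        have := intervalIntegral.integral_mono_on (by linarith : t/2 ≤ t)
          (hII (t/2) t hTh (by linarith)) (intervalIntegrable_const (c := u t))
          (fun x hx => hm (Set.mem_Ioi.mpr (by linarith [hx.1])) (Set.mem_Ioi.mpr hx0t) hx.2)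
        rw [intervalIntegral.integral_const, e2, smul_eq_mul] at this
        linarith
      constructor
      · have h0' : (t/2) * 0 ≤ (t/2) * u t := by linarith
        exact le_of_mul_le_mul_left h0' (by linarith)
      · linarith
    · -- antitone
      have e1 : ∫ s in t..(2*t), u s = V (2*t) - V t := hsub t (2*t) hTt (by linarith)
      have e2 : ∫ s in (t/2)..t, u s = V t - V (t/2) := hsub (t/2) t hTh (by linarith)
      have b1 : V (2*t) - V t ≤ t * u t := by
        have := intervalIntegral.integral_mono_on (by linarith : t ≤ 2*t)
          (hII t (2*t) hTt (by linarith)) (intervalIntegrable_const (c := u t))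
          (fun x hx => hm (Set.mem_Ioi.mpr hx0t) (Set.mem_Ioi.mpr (by linarith [hx.1])) hx.1)
        rw [intervalIntegral.integral_const, e1, smul_eq_mul] at this
        linarith
      have b2 : (t/2) * u t ≤ V t - V (t/2) := by
        have := intervalIntegral.integral_mono_on (by linarith : t/2 ≤ t)
          (intervalIntegrable_const (c := u t)) (hII (t/2) t hTh (by linarith))
          (fun x hx => hm (Set.mem_Ioi.mpr (by linarith [hx.1])) (Set.mem_Ioi.mpr hx0t) hx.2)
        rw [intervalIntegral.integral_const, e2, smul_eq_mul] at this
        linarith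
      constructor
      · have h0' : t * 0 ≤ t * u t := by linarith
        exact le_of_mul_le_mul_left h0' htpos
      · linarith
  obtain ⟨hu0, hub⟩ := key
  -- rpow comparison
  have hrp : t⁻¹ ≤ t ^ (ε - 1) := by
    have := Real.rpow_le_rpow_of_exponent_le ht1 (by linarith : (-1:ℝ) ≤ ε - 1)
    rwa [Real.rpow_neg_one] at this
  have hrppos : 0 < t ^ (ε - 1) := Real.rpow_pos_of_pos htpos _
  rw [Real.norm_eq_abs, Real.norm_eq_abs, abs_of_nonneg hu0,
    abs_of_nonneg (by positivity : (0:ℝ) ≤ t ^ (ε - 1) * L t)]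
  -- u t ≤ c * L t / t ≤ c * t^(ε-1) * L t
  have h1 : u t ≤ c * L t / t := (le_div_iff₀ htpos).mpr (by linarith)
  rw [div_eq_mul_inv] at h1
  have h2 : c * L t * t⁻¹ ≤ c * (t ^ (ε - 1) * L t) := by
    calc c * L t * t⁻¹ ≤ c * L t * t ^ (ε - 1) :=
          mul_le_mul_of_nonneg_left hrp (le_of_lt (mul_pos hc hLt))
      _ = c * (t ^ (ε - 1) * L t) := by ring
  linarith
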